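/- For every open J ⊆ ℝ and names ρ, σ, τ: if J ⊩ ρ = σ and J ⊩ σ = τ, then J ⊩ ρ = τ. -/

import Mathlib

/-- Names over ℝ: a name is a family of pairs of a name and an open set of reals. -/
inductive Name : Type 1
  | mk (ι : Type) (elem : ι → Name) (cond : ι → Set ℝ) (hopen : ∀ i, IsOpen (cond i)) : Name

namespace Name

/-- The index type of the family of pairs of a name. -/
def idx : Name → Type
  | mk ι _ _ _ => ι

/-- The name component of the `i`-th pair. -/
def elem : (σ : Name) → σ.idx → Name
  | mk _ e _ _ => e

/-- The open-set component of the `i`-th pair. -/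
def cond : (σ : Name) → σ.idx → Set ℝ
  | mk _ _ c _ => c

theorem cond_isOpen : ∀ (σ : Name) (i : σ.idx), IsOpen (σ.cond i)
  | mk _ _ _ h => h

/-- Rank of a name, used for the recursive definition of forcing. -/
noncomputable def rank : Name → Ordinal.{0}
  | mk _ e _ _ => Ordinal.lsub fun i => rank (e i)

theorem rank_elem_lt : ∀ (σ : Name) (i : σ.idx), (σ.elem i).rank < σ.rank
  | mk ι e c h, i => by
    simpa [rank, elem] using Ordinal.lt_lsub (fun i => rank (e i)) i

theorem lex_max_min_lt {a a' b : Ordinal.{0}} (h : a' < a) :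
    Prod.Lex (· < ·) (· < ·) (max a' b, min a' b) (max a b, min a b) := by
  rcases le_or_gt a b with hab | hab
  · rw [max_eq_right hab, max_eq_right (h.le.trans hab), min_eq_left hab,
      min_eq_left (h.le.trans hab)]
    exact Prod.Lex.right _ h
  · rw [max_eq_left hab.le]
    exact Prod.Lex.left _ _ (max_lt h hab)

mutual
  /-- `feq σ τ J` means `J ⊩ σ = τ`. -/
  def feq (σ τ : Name) (J : Set ℝ) : Prop :=
    (∀ i : σ.idx, fmem (σ.elem i) τ (J ∩ σ.cond i)) ∧
    (∀ j : τ.idx, fmem (τ.elem j) σ (J ∩ τ.cond j))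
  termination_by (max σ.rank τ.rank, min σ.rank τ.rank)
  decreasing_by
    · exact lex_max_min_lt (rank_elem_lt σ i)
    · rw [max_comm σ.rank, min_comm σ.rank]
      exact lex_max_min_lt (rank_elem_lt τ j)

  /-- `fmem σ τ J` means `J ⊩ σ ∈ τ`. -/
  def fmem (σ τ : Name) (J : Set ℝ) : Prop :=
    ∀ r ∈ J, ∃ (j : τ.idx) (J' : Set ℝ), IsOpen J' ∧ r ∈ J' ∩ τ.cond j ∧
      feq σ (τ.elem j) (J' ∩ τ.cond j)
  termination_by (max σ.rank τ.rank, min σ.rank τ.rank)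
  decreasing_by
    rw [max_comm σ.rank, min_comm σ.rank, max_comm σ.rank, min_comm σ.rank]
    exact lex_max_min_lt (rank_elem_lt τ j)
end

end Name


namespace Name

theorem max3_lt {a b c a' b' c' : Ordinal.{0}} (ha : a' < a) (hb : b' < b) (hc : c' < c) :
    max (max a' b') c' < max (max a b) c :=
  max_lt (max_lt (ha.trans_le (le_max_left _ _ |>.trans (le_max_left _ _)))
    (hb.trans_le (le_max_right _ _ |>.trans (le_max_left _ _)))) (hc.trans_le (le_max_right _ _))

theorem fmem_mono {σ τ : Name} {J K : Set ℝ} (hK : K ⊆ J) (h : fmem σ τ J) :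
    fmem σ τ K := by
  rw [fmem] at h ⊢
  exact fun r hr => h r (hK hr)

theorem feq_mono {σ τ : Name} {J K : Set ℝ} (hK : K ⊆ J) (h : feq σ τ J) :
    feq σ τ K := by
  rw [feq] at h ⊢
  exact ⟨fun i => fmem_mono (Set.inter_subset_inter_left _ hK) (h.1 i),
    fun j => fmem_mono (Set.inter_subset_inter_left _ hK) (h.2 j)⟩

theorem feq_symm {σ τ : Name} {J : Set ℝ} (h : feq σ τ J) : feq τ σ J := by
  rw [feq] at h ⊢
  exact ⟨h.2, h.1⟩

theorem feq_trans (ρ σ τ : Name) (J : Set ℝ) (h₁ : feq ρ σ J) (h₂ : feq σ τ J) :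
    feq ρ τ J := by
  rw [feq] at h₁ h₂ ⊢
  constructor
  · intro i
    rw [fmem]
    intro r hr
    have hm := h₁.1 i
    rw [fmem] at hm
    obtain ⟨j, J', hJ'o, hrm, hfe⟩ := hm r hr
    have hm2 := h₂.1 j
    rw [fmem] at hm2
    obtain ⟨k, J'', hJ''o, hr2, hfe2⟩ := hm2 r ⟨hr.1, hrm.2⟩
    refine ⟨k, J' ∩ σ.cond j ∩ J'', (hJ'o.inter (σ.cond_isOpen j)).inter hJ''o,
      ⟨⟨⟨hrm.1, hrm.2⟩, hr2.1⟩, hr2.2⟩, ?_⟩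
    refine feq_trans _ (σ.elem j) _ _ (feq_mono ?_ hfe) (feq_mono ?_ hfe2)
    · intro x hx; exact ⟨hx.1.1.1, hx.1.1.2⟩
    · intro x hx; exact ⟨hx.1.2, hx.2⟩
  · intro k
    rw [fmem]
    intro r hr
    have hm := h₂.2 k
    rw [fmem] at hm
    obtain ⟨j, J', hJ'o, hrm, hfe⟩ := hm r hr
    have hm2 := h₁.2 j
    rw [fmem] at hm2
    obtain ⟨i, J'', hJ''o, hr2, hfe2⟩ := hm2 r ⟨hr.1, hrm.2⟩
    refine ⟨i, J' ∩ σ.cond j ∩ J'', (hJ'o.inter (σ.cond_isOpen j)).inter hJ''o,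
      ⟨⟨⟨hrm.1, hrm.2⟩, hr2.1⟩, hr2.2⟩, ?_⟩
    refine feq_trans _ (σ.elem j) _ _ (feq_mono ?_ hfe) (feq_mono ?_ hfe2)
    · intro x hx; exact ⟨hx.1.1.1, hx.1.1.2⟩
    · intro x hx; exact ⟨hx.1.2, hx.2⟩
termination_by max (max ρ.rank σ.rank) τ.rank
decreasing_by
  · exact max3_lt (rank_elem_lt ρ i) (rank_elem_lt σ j) (rank_elem_lt τ k)
  · calc max (max (τ.elem k).rank (σ.elem j).rank) (ρ.elem i).rank
        < max (max τ.rank σ.rank) ρ.rank :=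
          max3_lt (rank_elem_lt τ k) (rank_elem_lt σ j) (rank_elem_lt ρ i)
      _ = max (max ρ.rank σ.rank) τ.rank := by
          rw [max_assoc, max_comm σ.rank, ← max_assoc, max_comm τ.rank, max_assoc, max_comm τ.rank, ← max_assoc]

end Name

theorem forces_eq_trans (J : Set ℝ) (hJ : IsOpen J) (ρ σ τ : Name)
    (h₁ : Name.feq ρ σ J) (h₂ : Name.feq σ τ J) : Name.feq ρ τ J :=
  Name.feq_trans ρ σ τ J h₁ h₂
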